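/- A direct sum algebra A = ⊕_{i∈I} A_i acting on ⊕_{i∈I} H_i has the closability property if and only if every summand A_i has the closability property. -/

import Mathlib

/-- A (possibly unbounded) densely defined linear transformation `X` commutes with a
set `A` of bounded operators if the domain of `X` is invariant under every `T ∈ A`
and `X T h = T X h` on the domain. -/
def Commutes {H : Type*} [NormedAddCommGroup H] [InnerProductSpace ℂ H]
    (A : Set (H →L[ℂ] H)) (X : H →ₗ.[ℂ] H) : Prop :=
  ∀ T ∈ A, ∀ h : X.domain, ∃ h' : X.domain, (h' : H) = T h ∧ X h' = T (X h)

/-- A set of bounded operators has the closability property if every densely defined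
linear transformation commuting with it is closable. -/
def ClosabilityProperty {H : Type*} [NormedAddCommGroup H] [InnerProductSpace ℂ H]
    (A : Set (H →L[ℂ] H)) : Prop :=
  ∀ X : H →ₗ.[ℂ] H, Dense (X.domain : Set H) → Commutes A X → X.IsClosable

open scoped ENNReal

namespace Stmt11Aux

lemma isClosable_of_forall {H : Type*} [NormedAddCommGroup H] [InnerProductSpace ℂ H]
    (X : H →ₗ.[ℂ] H)
    (h : ∀ y : H, ((0 : H), y) ∈ closure (X.graph : Set (H × H)) → y = 0) :
    X.IsClosable := by
  have hg : ∀ x : H × H, x ∈ X.graph.topologicalClosure → x.fst = 0 → x.snd = 0 := by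
    rintro ⟨a, b⟩ hx ha
    have hx' : (a, b) ∈ closure (X.graph : Set (H × H)) := by
      rw [← Submodule.topologicalClosure_coe]; exact hx
    simp only at ha
    subst ha
    exact h b hx'
  exact ⟨_, (Submodule.toLinearPMap_graph_eq _ hg).symm⟩

lemma eq_zero_of_isClosable {H : Type*} [NormedAddCommGroup H] [InnerProductSpace ℂ H]
    {X : H →ₗ.[ℂ] H} (hX : X.IsClosable) {y : H}
    (hy : ((0 : H), y) ∈ closure (X.graph : Set (H × H))) : y = 0 := by
  obtain ⟨f', hf'⟩ := hX
  rw [← Submodule.topologicalClosure_coe, hf'] at hy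
  exact f'.graph_fst_eq_zero_snd hy rfl

variable {I : Type*} {Hi : I → Type*} [∀ i, NormedAddCommGroup (Hi i)]
  [∀ i, InnerProductSpace ℂ (Hi i)]

noncomputable def projL (i : I) : lp (fun i => Hi i) 2 →ₗ[ℂ] Hi i where
  toFun x := x i
  map_add' x y := by simp only [lp.coeFn_add, Pi.add_apply]
  map_smul' c x := by simp only [lp.coeFn_smul, Pi.smul_apply, RingHom.id_apply]

noncomputable def projCLM (i : I) : lp (fun i => Hi i) 2 →L[ℂ] Hi i :=
  (projL i).mkContinuous 1 fun x => by
    rw [one_mul]; exact lp.norm_apply_le_norm (by norm_num : (2 : ℝ≥0∞) ≠ 0) x i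

@[simp] lemma projCLM_apply (i : I) (x : lp (fun i => Hi i) 2) : projCLM i x = x i := rfl

noncomputable def singleL (i : I) : Hi i →ₗ[ℂ] lp (fun i => Hi i) 2 :=
  letI := Classical.decEq I
  { toFun := fun w => lp.single 2 i w
    map_add' := fun a b => by
      apply lp.ext
      funext j
      rcases eq_or_ne j i with rfl | hj
      · simp [lp.single_apply_self, lp.coeFn_add]
      · simp [lp.single_apply_ne _ _ _ hj, lp.coeFn_add]
    map_smul' := fun c a => by simp }

noncomputable def singleCLM (i : I) : Hi i →L[ℂ] lp (fun i => Hi i) 2 :=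
  letI := Classical.decEq I
  (singleL i).mkContinuous 1 fun w => by
    have h2 : 0 < (2 : ℝ≥0∞) := by norm_num
    have := lp.norm_single (E := Hi) h2 i w
    simpa [singleL] using this.le

@[simp] lemma singleCLM_apply_self (i : I) (w : Hi i) :
    (singleCLM i w : ∀ j, Hi j) i = w := by
  letI := Classical.decEq I
  exact lp.single_apply_self 2 i w

lemma singleCLM_apply_ne (i : I) {j : I} (h : j ≠ i) (w : Hi i) :
    (singleCLM i w : ∀ j, Hi j) j = 0 := by
  letI := Classical.decEq I
  exact lp.single_apply_ne 2 i w h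

lemma norm_singleCLM (i : I) (w : Hi i) : ‖singleCLM i w‖ = ‖w‖ := by
  letI := Classical.decEq I
  have h2 : 0 < (2 : ℝ≥0∞) := by norm_num
  have := lp.norm_single (E := Hi) h2 i w
  simpa [singleCLM, singleL] using this


noncomputable def diagCLM (i : I) (T : Hi i →L[ℂ] Hi i) :
    lp (fun i => Hi i) 2 →L[ℂ] lp (fun i => Hi i) 2 :=
  (singleCLM i).comp (T.comp (projCLM i))

lemma diagCLM_apply (i : I) (T : Hi i →L[ℂ] Hi i) (x : lp (fun i => Hi i) 2) :
    diagCLM i T x = singleCLM i (T (x i)) := rfl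

lemma diag_mem (Ai : ∀ i, Subalgebra ℂ (Hi i →L[ℂ] Hi i)) (i : I)
    {T : Hi i →L[ℂ] Hi i} (hT : T ∈ Ai i) :
    diagCLM i T ∈ {T' : lp (fun i => Hi i) 2 →L[ℂ] lp (fun i => Hi i) 2 |
      ∃ Ti : ∀ i, Hi i →L[ℂ] Hi i,
        (∀ i, Ti i ∈ Ai i) ∧ BddAbove (Set.range fun i => ‖Ti i‖) ∧
        ∀ x : lp (fun i => Hi i) 2, ∀ i, (T' x) i = Ti i (x i)} := by
  classical
  refine ⟨fun j => if h : i = j then h ▸ T else 0, ?_, ?_, ?_⟩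
  · intro j
    rcases eq_or_ne i j with rfl | hij
    · beta_reduce; rw [dif_pos rfl]; exact hT
    · beta_reduce; rw [dif_neg hij]; exact zero_mem _
  · refine ⟨‖T‖, ?_⟩
    rintro r ⟨j, rfl⟩
    rcases eq_or_ne i j with rfl | hij
    · beta_reduce; rw [dif_pos rfl]
    · beta_reduce; rw [dif_neg hij]; simp
  · intro x j
    rcases eq_or_ne i j with rfl | hij
    · beta_reduce; rw [dif_pos rfl, diagCLM_apply, singleCLM_apply_self]
    · beta_reduce; rw [dif_neg hij, diagCLM_apply, singleCLM_apply_ne i (Ne.symm hij)]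
      simp


lemma forward [∀ i, CompleteSpace (Hi i)] {Ai : ∀ i, Subalgebra ℂ (Hi i →L[ℂ] Hi i)}
    (h : ∀ i, ClosabilityProperty ((Ai i : Set (Hi i →L[ℂ] Hi i)))) :
    ClosabilityProperty
      {T : lp (fun i => Hi i) 2 →L[ℂ] lp (fun i => Hi i) 2 |
        ∃ Ti : ∀ i, Hi i →L[ℂ] Hi i,
          (∀ i, Ti i ∈ Ai i) ∧ BddAbove (Set.range fun i => ‖Ti i‖) ∧
          ∀ x : lp (fun i => Hi i) 2, ∀ i, (T x) i = Ti i (x i)} := by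
  intro X hdense hcomm
  let Xi : ∀ i, Hi i →ₗ.[ℂ] Hi i := fun i =>
    { domain := X.domain.comap (singleCLM i : Hi i →L[ℂ] lp (fun i => Hi i) 2).toLinearMap
      toFun := (projCLM i).toLinearMap.comp
        (X.toFun.comp ((singleCLM i).toLinearMap.restrict fun _ hw => hw)) }
  have hXi_apply : ∀ i (w : (Xi i).domain),
      Xi i w = projCLM i (X ⟨singleCLM i (w : Hi i), w.2⟩) := fun i w => rfl
  have key : ∀ i (x : X.domain),
      ∃ hx' : singleCLM i ((x : lp (fun i => Hi i) 2) i) ∈ X.domain,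
        X ⟨singleCLM i ((x : lp (fun i => Hi i) 2) i), hx'⟩ =
          singleCLM i ((X x : lp (fun i => Hi i) 2) i) := by
    intro i x
    obtain ⟨h', hh1, hh2⟩ := hcomm _ (diag_mem Ai i (one_mem (Ai i))) x
    have hh1' : (h' : lp (fun i => Hi i) 2) = singleCLM i ((x : lp (fun i => Hi i) 2) i) := by
      rw [hh1, diagCLM_apply]
      simp
    refine ⟨hh1' ▸ h'.2, ?_⟩
    have heq : (⟨singleCLM i ((x : lp (fun i => Hi i) 2) i), hh1' ▸ h'.2⟩ : X.domain) = h' :=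
      Subtype.ext hh1'.symm
    rw [heq, hh2, diagCLM_apply]
    simp
  have hdense_i : ∀ i, Dense ((Xi i).domain : Set (Hi i)) := by
    intro i v
    rw [Metric.mem_closure_iff]
    intro ε hε
    obtain ⟨d, hd, hdist⟩ := Metric.mem_closure_iff.mp (hdense (singleCLM i v)) ε hε
    obtain ⟨hx', -⟩ := key i ⟨d, hd⟩
    refine ⟨d i, hx', ?_⟩
    have h1 : dist v (d i) = ‖(singleCLM i v - d : lp (fun i => Hi i) 2) i‖ := by
      rw [dist_eq_norm, lp.coeFn_sub, Pi.sub_apply, singleCLM_apply_self]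
    calc dist v (d i) ≤ ‖(singleCLM i v - d : lp (fun i => Hi i) 2)‖ := by
          rw [h1]; exact lp.norm_apply_le_norm (by norm_num : (2 : ℝ≥0∞) ≠ 0) _ i
      _ < ε := by rwa [← dist_eq_norm]
  have hcomm_i : ∀ i, Commutes ((Ai i : Set (Hi i →L[ℂ] Hi i))) (Xi i) := by
    intro i T hT w
    obtain ⟨h', hh1, hh2⟩ := hcomm _ (diag_mem Ai i hT) ⟨singleCLM i (w : Hi i), w.2⟩
    have hh1' : (h' : lp (fun i => Hi i) 2) = singleCLM i (T (w : Hi i)) := by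
      rw [hh1, diagCLM_apply, singleCLM_apply_self]
    have hmem : T (w : Hi i) ∈ (Xi i).domain := by
      show singleCLM i (T (w : Hi i)) ∈ X.domain
      exact hh1' ▸ h'.2
    refine ⟨⟨T (w : Hi i), hmem⟩, rfl, ?_⟩
    rw [hXi_apply, hXi_apply]
    have heq : (⟨singleCLM i (T (w : Hi i)), hmem⟩ : X.domain) = h' := Subtype.ext hh1'.symm
    rw [heq, hh2, diagCLM_apply]
    simp
  have hclos_i : ∀ i, (Xi i).IsClosable := fun i => h i (Xi i) (hdense_i i) (hcomm_i i)
  apply isClosable_of_forall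
  intro k hk
  apply lp.ext
  funext i
  have hmaps : Set.MapsTo ((projCLM i).prodMap (projCLM i))
      (X.graph : Set (lp (fun i => Hi i) 2 × lp (fun i => Hi i) 2))
      ((Xi i).graph : Set (Hi i × Hi i)) := by
    rintro ⟨a, b⟩ hab
    rw [SetLike.mem_coe, LinearPMap.mem_graph_iff] at hab
    obtain ⟨x, hx1, hx2⟩ := hab
    simp only at hx1 hx2
    subst hx1; subst hx2
    rw [SetLike.mem_coe, LinearPMap.mem_graph_iff]
    obtain ⟨hx', hXval⟩ := key i x
    refine ⟨⟨(x : lp (fun i => Hi i) 2) i, hx'⟩, rfl, ?_⟩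
    rw [hXi_apply]
    show projCLM i (X ⟨singleCLM i ((x : lp (fun i => Hi i) 2) i), hx'⟩) = _
    rw [hXval]
    simp
  have hk' := map_mem_closure ((projCLM i).prodMap (projCLM i)).continuous hk hmaps
  have hzero : (projCLM i).prodMap (projCLM i) ((0 : lp (fun i => Hi i) 2), k)
      = ((0 : Hi i), (k : ∀ j, Hi j) i) := by
    simp
  rw [hzero] at hk'
  have := eq_zero_of_isClosable (hclos_i i) hk'
  simpa using this

lemma backward [∀ i, CompleteSpace (Hi i)] {Ai : ∀ i, Subalgebra ℂ (Hi i →L[ℂ] Hi i)}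
    (h : ClosabilityProperty
      {T : lp (fun i => Hi i) 2 →L[ℂ] lp (fun i => Hi i) 2 |
        ∃ Ti : ∀ i, Hi i →L[ℂ] Hi i,
          (∀ i, Ti i ∈ Ai i) ∧ BddAbove (Set.range fun i => ‖Ti i‖) ∧
          ∀ x : lp (fun i => Hi i) 2, ∀ i, (T x) i = Ti i (x i)}) (i0 : I) :
    ClosabilityProperty ((Ai i0 : Set (Hi i0 →L[ℂ] Hi i0))) := by
  intro X0 hdense hcomm
  let X : lp (fun i => Hi i) 2 →ₗ.[ℂ] lp (fun i => Hi i) 2 :=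
    { domain := X0.domain.comap (projCLM i0 : lp (fun i => Hi i) 2 →L[ℂ] Hi i0).toLinearMap
      toFun := (singleCLM i0).toLinearMap.comp
        (X0.toFun.comp ((projCLM i0).toLinearMap.restrict fun _ hw => hw)) }
  have hX_apply : ∀ (x : X.domain),
      X x = singleCLM i0 (X0 ⟨(x : lp (fun i => Hi i) 2) i0, x.2⟩) := fun x => rfl
  have hXdense : Dense (X.domain : Set (lp (fun i => Hi i) 2)) := by
    intro x
    rw [Metric.mem_closure_iff]
    intro ε hε
    obtain ⟨d, hd, hdist⟩ := Metric.mem_closure_iff.mp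
      (hdense ((x : ∀ j, Hi j) i0)) ε hε
    refine ⟨x + singleCLM i0 (d - (x : ∀ j, Hi j) i0), ?_, ?_⟩
    · show ((x + singleCLM i0 (d - (x : ∀ j, Hi j) i0) : lp (fun i => Hi i) 2) : ∀ j, Hi j) i0
        ∈ X0.domain
      rw [lp.coeFn_add, Pi.add_apply, singleCLM_apply_self]
      simpa using hd
    · rw [dist_eq_norm]
      have : x - (x + singleCLM i0 (d - (x : ∀ j, Hi j) i0))
          = -(singleCLM i0 (d - (x : ∀ j, Hi j) i0)) := by abel
      rw [this, norm_neg, norm_singleCLM, ← norm_neg, neg_sub, ← dist_eq_norm]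
      exact hdist
  have hXcomm : Commutes
      {T : lp (fun i => Hi i) 2 →L[ℂ] lp (fun i => Hi i) 2 |
        ∃ Ti : ∀ i, Hi i →L[ℂ] Hi i,
          (∀ i, Ti i ∈ Ai i) ∧ BddAbove (Set.range fun i => ‖Ti i‖) ∧
          ∀ x : lp (fun i => Hi i) 2, ∀ i, (T x) i = Ti i (x i)} X := by
    rintro T ⟨Ti, hTmem, hTbdd, hTapp⟩ x
    obtain ⟨h0, hh01, hh02⟩ := hcomm (Ti i0) (hTmem i0) ⟨(x : lp (fun i => Hi i) 2) i0, x.2⟩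
    have hmem : T (x : lp (fun i => Hi i) 2) ∈ X.domain := by
      show (T (x : lp (fun i => Hi i) 2) : ∀ j, Hi j) i0 ∈ X0.domain
      rw [hTapp]
      exact hh01 ▸ h0.2
    refine ⟨⟨T (x : lp (fun i => Hi i) 2), hmem⟩, rfl, ?_⟩
    rw [hX_apply, hX_apply]
    have heq : (⟨(T (x : lp (fun i => Hi i) 2) : ∀ j, Hi j) i0, hmem⟩ : X0.domain) = h0 := by
      apply Subtype.ext
      show (T (x : lp (fun i => Hi i) 2) : ∀ j, Hi j) i0 = (h0 : Hi i0)
      rw [hTapp, hh01]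
    rw [heq, hh02]
    apply lp.ext
    funext j
    rcases eq_or_ne j i0 with rfl | hj
    · rw [singleCLM_apply_self, hTapp, singleCLM_apply_self]
    · rw [singleCLM_apply_ne i0 hj, hTapp, singleCLM_apply_ne i0 hj]
      simp
  have hXclos : X.IsClosable := h X hXdense hXcomm
  apply isClosable_of_forall
  intro y hy
  have hmaps : Set.MapsTo ((singleCLM i0).prodMap (singleCLM i0))
      (X0.graph : Set (Hi i0 × Hi i0))
      (X.graph : Set (lp (fun i => Hi i) 2 × lp (fun i => Hi i) 2)) := by
    rintro ⟨a, b⟩ hab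
    rw [SetLike.mem_coe, LinearPMap.mem_graph_iff] at hab
    obtain ⟨w, hw1, hw2⟩ := hab
    simp only at hw1 hw2
    subst hw1; subst hw2
    rw [SetLike.mem_coe, LinearPMap.mem_graph_iff]
    have hmem : singleCLM i0 (w : Hi i0) ∈ X.domain := by
      show ((singleCLM i0 (w : Hi i0) : lp (fun i => Hi i) 2) : ∀ j, Hi j) i0 ∈ X0.domain
      rw [singleCLM_apply_self]
      exact w.2
    refine ⟨⟨singleCLM i0 (w : Hi i0), hmem⟩, rfl, ?_⟩
    rw [hX_apply]
    show singleCLM i0 (X0 ⟨(singleCLM i0 (w : Hi i0) : ∀ j, Hi j) i0, hmem⟩)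
      = ((singleCLM i0).prodMap (singleCLM i0) ((w : Hi i0), X0 w)).2
    have heq : (⟨(singleCLM i0 (w : Hi i0) : ∀ j, Hi j) i0, hmem⟩ : X0.domain) = w := by
      apply Subtype.ext
      exact singleCLM_apply_self i0 (w : Hi i0)
    rw [heq]
    rfl
  have hy' := map_mem_closure ((singleCLM i0).prodMap (singleCLM i0)).continuous hy hmaps
  have hzero : (singleCLM i0).prodMap (singleCLM i0) ((0 : Hi i0), y)
      = ((0 : lp (fun i => Hi i) 2), singleCLM i0 y) := by
    simp
  rw [hzero] at hy'
  have hsy : singleCLM i0 y = 0 := eq_zero_of_isClosable hXclos hy'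
  have hrw : y = ((singleCLM i0 y : lp (fun i => Hi i) 2) : ∀ j, Hi j) i0 :=
    (singleCLM_apply_self i0 y).symm
  rw [hrw, hsy]
  rw [lp.coeFn_zero]
  rfl

end Stmt11Aux

/-- The direct sum ⊕ᵢ Aᵢ, consisting of the bounded operators on the
Hilbert space direct sum ⊕ᵢ Hᵢ acting componentwise through members Tᵢ ∈ Aᵢ with
uniformly bounded norms, has the closability property iff each Aᵢ does. -/
theorem stmt11 {I : Type*} (Hi : I → Type*) [∀ i, NormedAddCommGroup (Hi i)]
    [∀ i, InnerProductSpace ℂ (Hi i)] [∀ i, CompleteSpace (Hi i)]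
    (Ai : ∀ i, Subalgebra ℂ (Hi i →L[ℂ] Hi i)) :
    ClosabilityProperty
      {T : lp (fun i => Hi i) 2 →L[ℂ] lp (fun i => Hi i) 2 |
        ∃ Ti : ∀ i, Hi i →L[ℂ] Hi i,
          (∀ i, Ti i ∈ Ai i) ∧ BddAbove (Set.range fun i => ‖Ti i‖) ∧
          ∀ x : lp (fun i => Hi i) 2, ∀ i, (T x) i = Ti i (x i)} ↔
    ∀ i, ClosabilityProperty ((Ai i : Set (Hi i →L[ℂ] Hi i))) := by
  exact ⟨fun h i => Stmt11Aux.backward h i, fun h => Stmt11Aux.forward h⟩
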